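/- For natural numbers ℓ, j, n with n ≥ 3 and j even satisfying 2 ≤ j ≤ 2ℓ, we have 1 - λ(n,ℓ,j)/λ(n,ℓ,0) ≤ j((j+n)/2 - 1)/(2ℓ+n). -/

import Mathlib

open MeasureTheory Real

/-- The Gegenbauer polynomial (in dimension `n`) given by the Rodrigues formula. -/
noncomputable def gegenbauerP (n j : ℕ) (t : ℝ) : ℝ :=
  (-(1 : ℝ) / 2) ^ j * (Real.Gamma (((n : ℝ) - 1) / 2) / Real.Gamma ((j : ℝ) + ((n : ℝ) - 1) / 2)) *
    (1 - t ^ 2) ^ (-(((n : ℝ) - 3) / 2)) *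
    iteratedDeriv j (fun s : ℝ => (1 - s ^ 2) ^ ((j : ℝ) + ((n : ℝ) - 3) / 2)) t

/-- The Funk–Hecke coefficient `λ(n,ℓ,j) = ∫₋₁¹ t^(2ℓ) P_j(t) (1-t²)^((n-3)/2) dt`. -/
noncomputable def lamFH (n ℓ j : ℕ) : ℝ :=
  ∫ t in (-1 : ℝ)..(1 : ℝ), t ^ (2 * ℓ) * gegenbauerP n j t * (1 - t ^ 2) ^ (((n : ℝ) - 3) / 2)

namespace Stmt4Aux

open Set Polynomial intervalIntegral Finset

noncomputable def J (r : ℕ) (b : ℝ) : ℝ :=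
  ∫ t in (-1:ℝ)..1, t ^ r * (1 - t ^ 2) ^ b

lemma cont_base {b : ℝ} (hb : 0 ≤ b) : Continuous fun s : ℝ => (1 - s ^ 2) ^ b :=
  Continuous.rpow_const (by continuity) fun _ => Or.inr hb

lemma base_pos {s : ℝ} (hs : s ∈ Ioo (-1:ℝ) 1) : 0 < 1 - s ^ 2 := by
  obtain ⟨h1, h2⟩ := hs; nlinarith

lemma hasDerivAt_aux (P : Polynomial ℝ) (b : ℝ) {s : ℝ} (hs : 0 < 1 - s ^ 2) :
    HasDerivAt (fun t : ℝ => P.eval t * (1 - t ^ 2) ^ b)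
      (((1 - X ^ 2) * P.derivative - C (2 * b) * X * P).eval s * (1 - s ^ 2) ^ (b - 1)) s := by
  have h1 : HasDerivAt (fun t : ℝ => 1 - t ^ 2) (-(2 * s)) s := by
    simpa using ((hasDerivAt_pow 2 s).const_sub 1)
  have h2 := h1.rpow_const (p := b) (Or.inl hs.ne')
  have h3 := (P.hasDerivAt s).mul h2
  refine h3.congr_deriv ?_
  have hx : (1 - s ^ 2) ^ b = (1 - s ^ 2) * (1 - s ^ 2) ^ (b - 1) := by
    have h := Real.rpow_add hs 1 (b - 1)
    rw [Real.rpow_one] at h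
    rw [show (1:ℝ) + (b - 1) = b by ring] at h
    exact h
  rw [hx]
  simp only [eval_sub, eval_mul, eval_one, eval_pow, eval_X, eval_C, derivative_one]
  ring

noncomputable def Pseq (a : ℝ) : ℕ → Polynomial ℝ
  | 0 => 1
  | m + 1 => (1 - X ^ 2) * (Pseq a m).derivative - C (2 * (a - m)) * X * Pseq a m

lemma iteratedDeriv_eq (a : ℝ) (m : ℕ) {s : ℝ} (hs : s ∈ Ioo (-1:ℝ) 1) :
    iteratedDeriv m (fun t : ℝ => (1 - t ^ 2) ^ a) s
      = (Pseq a m).eval s * (1 - s ^ 2) ^ (a - m) := by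
  induction m generalizing s with
  | zero => simp [Pseq]
  | succ m ih =>
    rw [iteratedDeriv_succ]
    have hev : (iteratedDeriv m (fun t : ℝ => (1 - t ^ 2) ^ a))
        =ᶠ[nhds s] fun t => (Pseq a m).eval t * (1 - t ^ 2) ^ (a - m) := by
      filter_upwards [isOpen_Ioo.mem_nhds hs] with x hx
      exact ih hx
    rw [hev.deriv_eq]
    rw [(hasDerivAt_aux (Pseq a m) (a - m) (base_pos hs)).deriv]
    have : a - m - 1 = a - (m + 1 : ℕ) := by push_cast; ring
    rw [this, Pseq]

lemma ibp (P : Polynomial ℝ) (b : ℝ) (hb : 1 ≤ b) (r : ℕ) :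
    ∫ t in (-1:ℝ)..1,
        t ^ (r + 1) * (((1 - X ^ 2) * P.derivative - C (2 * b) * X * P).eval t
          * (1 - t ^ 2) ^ (b - 1))
      = -((r : ℝ) + 1) * ∫ t in (-1:ℝ)..1, t ^ r * (P.eval t * (1 - t ^ 2) ^ b) := by
  set Q : Polynomial ℝ := (1 - X ^ 2) * P.derivative - C (2 * b) * X * P with hQ
  have hb0 : (0:ℝ) ≤ b := by linarith
  have hb1 : (0:ℝ) ≤ b - 1 := by linarith
  have hcont1 : Continuous fun t : ℝ => ((r:ℝ) + 1) * t ^ r * (P.eval t * (1 - t ^ 2) ^ b) := by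
    exact (continuous_const.mul (continuous_pow r)).mul ((P.continuous).mul (cont_base hb0))
  have hcont2 : Continuous fun t : ℝ => t ^ (r + 1) * (Q.eval t * (1 - t ^ 2) ^ (b - 1)) := by
    exact (continuous_pow (r+1)).mul ((Q.continuous).mul (cont_base hb1))
  have key : ∫ t in (-1:ℝ)..1,
      (((r:ℝ) + 1) * t ^ r * (P.eval t * (1 - t ^ 2) ^ b)
        + t ^ (r + 1) * (Q.eval t * (1 - t ^ 2) ^ (b - 1))) = 0 := by
    have hftc := integral_eq_sub_of_hasDeriv_right_of_le (f := fun t : ℝ =>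
        t ^ (r + 1) * (P.eval t * (1 - t ^ 2) ^ b))
      (f' := fun t : ℝ => ((r:ℝ) + 1) * t ^ r * (P.eval t * (1 - t ^ 2) ^ b)
        + t ^ (r + 1) * (Q.eval t * (1 - t ^ 2) ^ (b - 1)))
      (a := (-1:ℝ)) (b := (1:ℝ)) (by norm_num)
      (((continuous_pow (r+1)).mul ((P.continuous).mul (cont_base hb0))).continuousOn)
      (fun x hx => by
        have h1 : HasDerivAt (fun t : ℝ => t ^ (r + 1) * (P.eval t * (1 - t ^ 2) ^ b))
            (((r:ℝ) + 1) * x ^ r * (P.eval x * (1 - x ^ 2) ^ b)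
              + x ^ (r + 1) * (Q.eval x * (1 - x ^ 2) ^ (b - 1))) x := by
          have := (hasDerivAt_pow (r + 1) x).mul (hasDerivAt_aux P b (base_pos hx))
          rw [hQ]
          refine this.congr_deriv ?_
          push_cast
          ring
        exact h1.hasDerivWithinAt)
      ((hcont1.add hcont2).intervalIntegrable _ _)
    rw [hftc]
    have hz : ∀ s : ℝ, 1 - s ^ 2 = 0 → s ^ (r+1) * (P.eval s * (1 - s ^ 2) ^ b) = 0 := by
      intro s hsz
      rw [hsz, Real.zero_rpow (by linarith)]
      ring
    beta_reduce
    rw [hz 1 (by norm_num), hz (-1) (by norm_num)]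
    ring
  rw [intervalIntegral.integral_add (hcont1.intervalIntegrable _ _)
    (hcont2.intervalIntegrable _ _)] at key
  have h3 : ∫ t in (-1:ℝ)..1, ((r:ℝ) + 1) * t ^ r * (P.eval t * (1 - t ^ 2) ^ b)
      = ((r:ℝ) + 1) * ∫ t in (-1:ℝ)..1, t ^ r * (P.eval t * (1 - t ^ 2) ^ b) := by
    rw [← intervalIntegral.integral_const_mul]
    congr 1; funext t; ring
  rw [h3] at key
  linarith

lemma ae_mem_Ioo : ∀ᵐ x : ℝ, x ∈ Set.uIoc (-1:ℝ) 1 → x ∈ Ioo (-1:ℝ) 1 := by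
  have h1 : ∀ᵐ x : ℝ, x ≠ 1 := by
    rw [ae_iff]
    simp
  filter_upwards [h1] with x hx hxm
  rw [uIoc_of_le (by norm_num : (-1:ℝ) ≤ 1)] at hxm
  exact ⟨hxm.1, lt_of_le_of_ne hxm.2 hx⟩

lemma recA (r : ℕ) (b : ℝ) (hb : 1 ≤ b) :
    2 * b * J (r + 2) (b - 1) = ((r : ℝ) + 1) * J r b := by
  have h := ibp 1 b hb r
  have hL : (∫ t in (-1:ℝ)..1,
        t ^ (r + 1) * (((1 - X ^ 2) * Polynomial.derivative (1:ℝ[X]) - C (2 * b) * X * 1).eval t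
          * (1 - t ^ 2) ^ (b - 1)))
      = -(2 * b) * J (r + 2) (b - 1) := by
    rw [J, ← intervalIntegral.integral_const_mul]
    congr 1; funext t
    simp only [derivative_one, mul_zero, zero_sub, eval_neg, eval_mul, eval_C, eval_X, mul_one]
    ring
  have hR : (∫ t in (-1:ℝ)..1, t ^ r * ((1:ℝ[X]).eval t * (1 - t ^ 2) ^ b)) = J r b := by
    rw [J]; congr 1; funext t; simp
  rw [hL, hR] at h
  linarith

lemma recSplit (r : ℕ) (b : ℝ) (hb : 1 ≤ b) :
    J r b = J r (b - 1) - J (r + 2) (b - 1) := by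
  have hi1 : IntervalIntegrable (fun t : ℝ => t ^ r * (1 - t ^ 2) ^ (b - 1)) volume (-1) 1 :=
    ((continuous_pow r).mul (cont_base (by linarith))).intervalIntegrable _ _
  have hi2 : IntervalIntegrable (fun t : ℝ => t ^ (r + 2) * (1 - t ^ 2) ^ (b - 1)) volume (-1) 1 :=
    ((continuous_pow (r + 2)).mul (cont_base (by linarith))).intervalIntegrable _ _
  rw [J, J, J, ← intervalIntegral.integral_sub hi1 hi2]
  apply intervalIntegral.integral_congr_ae
  filter_upwards [ae_mem_Ioo] with x hx hxm
  have hpos := base_pos (hx hxm)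
  have hsplit : (1 - x ^ 2) ^ b = (1 - x ^ 2) ^ (b - 1) * (1 - x ^ 2) := by
    have h := Real.rpow_add hpos (b - 1) 1
    rw [Real.rpow_one] at h
    nth_rewrite 1 [show b = b - 1 + 1 by ring]
    exact h
  rw [hsplit]; ring

lemma recB (r : ℕ) (b : ℝ) (hb : 1 ≤ b) :
    2 * b * J r (b - 1) = (2 * b + r + 1) * J r b := by
  have h1 := recA r b hb
  have h2 := recSplit r b hb
  nlinarith [h1, h2]

lemma Jpos (m : ℕ) (b : ℝ) (hb : 0 ≤ b) : 0 < J (2 * m) b := by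
  have hc : Continuous fun t : ℝ => t ^ (2 * m) * (1 - t ^ 2) ^ b :=
    (continuous_pow _).mul (cont_base hb)
  have hsplit : J (2 * m) b = (∫ t in (-1:ℝ)..0, t ^ (2 * m) * (1 - t ^ 2) ^ b)
      + ∫ t in (0:ℝ)..1, t ^ (2 * m) * (1 - t ^ 2) ^ b := by
    rw [J, ← intervalIntegral.integral_add_adjacent_intervals
      (hc.intervalIntegrable _ _) (hc.intervalIntegrable _ _)]
  rw [hsplit]
  have h1 : (0:ℝ) ≤ ∫ t in (-1:ℝ)..0, t ^ (2 * m) * (1 - t ^ 2) ^ b := by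
    apply intervalIntegral.integral_nonneg (by norm_num)
    intro u hu
    have h1 : (0:ℝ) ≤ u ^ (2 * m) := by
      rw [pow_mul]; exact pow_nonneg (sq_nonneg u) m
    have h2 : (0:ℝ) ≤ 1 - u ^ 2 := by
      obtain ⟨ha, hb'⟩ := hu; nlinarith
    exact mul_nonneg h1 (Real.rpow_nonneg h2 b)
  have h2 : (0:ℝ) < ∫ t in (0:ℝ)..1, t ^ (2 * m) * (1 - t ^ 2) ^ b := by
    apply intervalIntegral.intervalIntegral_pos_of_pos_on (hc.intervalIntegrable _ _)
    · intro x hx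
      obtain ⟨hx0, hx1⟩ := hx
      have : (0:ℝ) < 1 - x ^ 2 := by nlinarith
      exact mul_pos (pow_pos hx0 _) (Real.rpow_pos_of_pos this b)
    · norm_num
  linarith

lemma master (ν : ℝ) (hν : 0 ≤ ν) (ℓ : ℕ) : ∀ m : ℕ, m ≤ ℓ →
    (∏ i ∈ Finset.range (2 * m), (2 * (ν + 1 + i))) * (∏ k ∈ Finset.range m, ((ℓ : ℝ) - k))
        * J (2 * ℓ) ν
      = (∏ i ∈ Finset.range (2 * m), (2 * (ℓ : ℝ) - i))
        * (∏ k ∈ Finset.range m, ((ℓ : ℝ) + ν + 3 / 2 + k)) * J (2 * (ℓ - m)) (ν + 2 * m) := by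
  intro m
  induction m with
  | zero => simp
  | succ m ih =>
    intro hm
    have hm' : m ≤ ℓ := by omega
    have IH := ih hm'
    have hc1 : ((2 * (ℓ - (m + 1)) : ℕ) : ℝ) = 2 * (ℓ : ℝ) - 2 * m - 2 := by
      push_cast [Nat.cast_sub hm]
      ring
    have E1 := recA (2 * (ℓ - (m + 1))) (ν + 2 * m + 2) (by linarith)
    rw [show 2 * (ℓ - (m + 1)) + 2 = 2 * (ℓ - m) from by omega] at E1
    rw [show ν + 2 * (m : ℝ) + 2 - 1 = ν + 2 * m + 1 from by ring] at E1
    rw [hc1] at E1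
    have hc2 : ((2 * (ℓ - m) : ℕ) : ℝ) = 2 * (ℓ : ℝ) - 2 * m := by
      push_cast [Nat.cast_sub hm']
      ring
    have E2 := recB (2 * (ℓ - m)) (ν + 2 * m + 1) (by linarith)
    rw [show ν + 2 * (m : ℝ) + 1 - 1 = ν + 2 * m from by ring] at E2
    rw [hc2] at E2
    rw [show 2 * (m + 1) = (2 * m + 1) + 1 from by ring, Finset.prod_range_succ,
      Finset.prod_range_succ, Finset.prod_range_succ, Finset.prod_range_succ,
      Finset.prod_range_succ, Finset.prod_range_succ]
    push_cast
    set P2 := ∏ i ∈ Finset.range (2 * m), (2 * (ℓ : ℝ) - i) with hP2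
    set q2 := ∏ k ∈ Finset.range m, ((ℓ : ℝ) + ν + 3 / 2 + k) with hq2
    rw [show ν + 2 * ((m : ℝ) + 1) = ν + 2 * m + 2 from by ring] at *
    linear_combination (4 * (ν + 2 * (m:ℝ) + 1) * (ν + 2 * m + 2) * ((ℓ:ℝ) - m)) * IH
      + (((ℓ:ℝ) - m) * (2 * ν + 2 * m + 2 * (ℓ:ℝ) + 3) * P2 * q2) * E1
      + (2 * (ν + 2 * (m:ℝ) + 2) * ((ℓ:ℝ) - m) * P2 * q2) * E2

lemma GammaProd (x : ℝ) (hx : 0 < x) (k : ℕ) :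
    Real.Gamma (x + k) = (∏ i ∈ Finset.range k, (x + i)) * Real.Gamma x := by
  induction k with
  | zero => simp
  | succ k ih =>
    have hne : x + (k:ℝ) ≠ 0 := by positivity
    rw [show x + ((k:ℕ)+1 : ℕ) = (x + k) + 1 from by push_cast; ring]
    rw [Real.Gamma_add_one hne, ih, Finset.prod_range_succ]
    ring

lemma one_sub_prod_le (s : Finset ℕ) (f : ℕ → ℝ) (h0 : ∀ i ∈ s, 0 ≤ f i)
    (h1 : ∀ i ∈ s, f i ≤ 1) :
    1 - ∏ i ∈ s, f i ≤ ∑ i ∈ s, (1 - f i) := by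
  induction s using Finset.cons_induction with
  | empty => simp
  | cons a s ha ih =>
    rw [Finset.prod_cons, Finset.sum_cons]
    have hP0 : 0 ≤ ∏ i ∈ s, f i :=
      Finset.prod_nonneg fun i hi => h0 i (Finset.mem_cons_of_mem hi)
    have hP1 : ∏ i ∈ s, f i ≤ 1 :=
      Finset.prod_le_one (fun i hi => h0 i (Finset.mem_cons_of_mem hi))
        (fun i hi => h1 i (Finset.mem_cons_of_mem hi))
    have hih := ih (fun i hi => h0 i (Finset.mem_cons_of_mem hi))
      (fun i hi => h1 i (Finset.mem_cons_of_mem hi))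
    have ha0 := h0 a (Finset.mem_cons_self a s)
    have ha1 := h1 a (Finset.mem_cons_self a s)
    nlinarith

lemma lam0_eq (n ℓ : ℕ) (hn : 3 ≤ n) : lamFH n ℓ 0 = J (2 * ℓ) (((n:ℝ) - 3) / 2) := by
  have hn3 : (3:ℝ) ≤ (n:ℝ) := by exact_mod_cast hn
  have hΓ : Real.Gamma (((n : ℝ) - 1) / 2) ≠ 0 :=
    (Real.Gamma_pos_of_pos (by linarith)).ne'
  rw [lamFH, J]
  apply intervalIntegral.integral_congr_ae
  filter_upwards [ae_mem_Ioo] with t ht htm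
  have hpos := base_pos (ht htm)
  rw [gegenbauerP, iteratedDeriv_zero]
  beta_reduce
  simp only [Nat.cast_zero, zero_add, pow_zero]
  rw [div_self hΓ]
  have hcancel : (1 - t ^ 2) ^ (-(((n : ℝ) - 3) / 2)) * (1 - t ^ 2) ^ (((n : ℝ) - 3) / 2)
      = 1 := by
    rw [← Real.rpow_add hpos]
    simp
  linear_combination (t ^ (2 * ℓ) * (1 - t ^ 2) ^ (((n:ℝ) - 3) / 2)) * hcancel

lemma lamj_key (n ℓ j : ℕ) (hn : 3 ≤ n) (hj1 : 1 ≤ j) (hjℓ : j ≤ 2 * ℓ) :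
    lamFH n ℓ j * (∏ i ∈ Finset.range j, (((n:ℝ) - 3) / 2 + 1 + i)) * 2 ^ j
      = (∏ i ∈ Finset.range j, (2 * (ℓ:ℝ) - i)) * J (2 * ℓ - j) ((j:ℝ) + ((n:ℝ) - 3) / 2) := by
  have hn3 : (3:ℝ) ≤ (n:ℝ) := by exact_mod_cast hn
  set ν : ℝ := ((n:ℝ) - 3) / 2 with hν
  have hν0 : 0 ≤ ν := by rw [hν]; linarith
  set a : ℝ := (j:ℝ) + ν with ha
  have Bstep : ∀ m : ℕ, m < j →
      (∫ t in (-1:ℝ)..1, t ^ (2*ℓ - j + (m+1))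
          * ((Pseq a (m+1)).eval t * (1 - t^2) ^ (a - ((m+1:ℕ):ℝ))))
        = -(((2*ℓ - j + m : ℕ):ℝ) + 1)
          * ∫ t in (-1:ℝ)..1, t ^ (2*ℓ - j + m)
              * ((Pseq a m).eval t * (1 - t^2) ^ (a - (m:ℝ))) := by
    intro m hm
    have hmr : (m:ℝ) + 1 ≤ (j:ℝ) := by exact_mod_cast hm
    have hb : 1 ≤ a - m := by rw [ha]; linarith
    have h := ibp (Pseq a m) (a - m) hb (2*ℓ - j + m)
    rw [show a - (m:ℝ) - 1 = a - ((m+1:ℕ):ℝ) from by push_cast; ring] at h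
    have hPs : Pseq a (m+1)
        = (1 - X ^ 2) * (Pseq a m).derivative - C (2 * (a - (m:ℝ))) * X * Pseq a m := by
      rw [Pseq]
    rw [← hPs] at h
    exact h
  have Bchain : ∀ m : ℕ, m ≤ j →
      (∫ t in (-1:ℝ)..1, t ^ (2*ℓ - j + m) * ((Pseq a m).eval t * (1 - t^2) ^ (a - (m:ℝ))))
        = (∏ i ∈ Finset.range m, (-(((2*ℓ - j + i : ℕ):ℝ) + 1)))
          * ∫ t in (-1:ℝ)..1, t ^ (2*ℓ - j + 0)
              * ((Pseq a 0).eval t * (1 - t^2) ^ (a - ((0:ℕ):ℝ))) := by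
    intro m
    induction m with
    | zero => simp
    | succ m ih =>
      intro hm
      rw [Bstep m (by omega), ih (by omega), Finset.prod_range_succ]
      ring
  have hB0 : (∫ t in (-1:ℝ)..1, t ^ (2*ℓ - j + 0)
      * ((Pseq a 0).eval t * (1 - t^2) ^ (a - ((0:ℕ):ℝ)))) = J (2*ℓ - j) a := by
    rw [J]
    congr 1; funext t
    simp [Pseq]
  have hprod : (∏ i ∈ Finset.range j, (-(((2*ℓ - j + i : ℕ):ℝ) + 1)))
      = (-1)^j * ∏ i ∈ Finset.range j, (2 * (ℓ:ℝ) - i) := by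
    have h1 : ∀ i ∈ Finset.range j, (-(((2*ℓ - j + i : ℕ):ℝ) + 1))
        = (-1) * (2 * (ℓ:ℝ) - ((j - 1 - i : ℕ):ℝ)) := by
      intro i hi
      rw [Finset.mem_range] at hi
      have e1 : ((2*ℓ - j + i : ℕ):ℝ) = 2*(ℓ:ℝ) - j + i := by
        push_cast [Nat.cast_sub hjℓ]
        ring
      have e2 : ((j - 1 - i : ℕ):ℝ) = (j:ℝ) - 1 - i := by
        have h3 : j - 1 - i = j - (1 + i) := by omega
        rw [h3]
        push_cast [Nat.cast_sub (by omega : 1 + i ≤ j)]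
        ring
      rw [e1, e2]; ring
    rw [Finset.prod_congr rfl h1, Finset.prod_mul_distrib, Finset.prod_const,
      Finset.card_range]
    congr 1
    exact Finset.prod_range_reflect (fun k : ℕ => 2 * (ℓ:ℝ) - (k:ℝ)) j
  have hΓpos : 0 < Real.Gamma (ν + 1) := Real.Gamma_pos_of_pos (by linarith)
  have hGam : Real.Gamma ((j:ℝ) + ((n:ℝ) - 1) / 2)
      = (∏ i ∈ Finset.range j, (ν + 1 + i)) * Real.Gamma (ν + 1) := by
    rw [show (j:ℝ) + ((n:ℝ) - 1) / 2 = (ν + 1) + j from by rw [hν]; ring]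
    exact GammaProd (ν + 1) (by linarith) j
  have hlam : lamFH n ℓ j = ((-(1:ℝ))/2)^j
      * (Real.Gamma (((n:ℝ) - 1) / 2) / Real.Gamma ((j:ℝ) + ((n:ℝ) - 1) / 2))
      * ∫ t in (-1:ℝ)..1, t ^ (2*ℓ - j + j) * ((Pseq a j).eval t * (1 - t^2) ^ (a - (j:ℝ))) := by
    rw [lamFH, ← intervalIntegral.integral_const_mul]
    apply intervalIntegral.integral_congr_ae
    filter_upwards [ae_mem_Ioo] with t ht htm
    have hpos := base_pos (ht htm)
    rw [gegenbauerP]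
    rw [show ((j:ℝ) + ((n:ℝ) - 3) / 2) = a from by rw [ha, hν]]
    rw [show (2*ℓ - j + j) = 2*ℓ from by omega]
    rw [iteratedDeriv_eq a j (ht htm)]
    rw [show (-(((n:ℝ) - 3) / 2)) = -ν from by rw [hν]]
    rw [show (((n:ℝ) - 3) / 2) = ν from by rw [hν]]
    have hcancel : (1 - t^2) ^ (-ν) * (1 - t^2) ^ ν = 1 := by
      rw [← Real.rpow_add hpos]
      simp
    linear_combination ((-(1:ℝ))/2)^j
      * (Real.Gamma (((n:ℝ) - 1) / 2) / Real.Gamma ((j:ℝ) + ((n:ℝ) - 1) / 2))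
      * t ^ (2*ℓ) * ((Pseq a j).eval t * (1 - t^2) ^ (a - (j:ℝ))) * hcancel
  rw [hlam, Bchain j le_rfl, hB0, hprod, hGam]
  rw [show Real.Gamma (((n:ℝ) - 1) / 2) = Real.Gamma (ν + 1) from by rw [hν]; ring_nf]
  have hPne : (∏ i ∈ Finset.range j, (ν + 1 + i)) ≠ 0 :=
    (Finset.prod_pos fun i _ => by positivity).ne'
  field_simp
  have hsq : ((-1:ℝ))^j * (-1)^j = 1 := by
    rw [← pow_add, ← two_mul, pow_mul]
    norm_num
  have h2 : ((-1:ℝ)/2)^j * 2^j = (-1)^j := by rw [← mul_pow]; norm_num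
  linear_combination ((∏ i ∈ Finset.range j, (2 * (ℓ:ℝ) - i)) * J (2 * ℓ - j) a * (-1)^j) * h2
    + ((∏ i ∈ Finset.range j, (2 * (ℓ:ℝ) - i)) * J (2 * ℓ - j) a) * hsq

end Stmt4Aux

/-- For `n ≥ 3` and even `j` with `2 ≤ j ≤ 2ℓ`,
`1 - λ(n,ℓ,j)/λ(n,ℓ,0) ≤ j((j+n)/2 - 1)/(2ℓ+n)`. -/
theorem stmt4 (n ℓ j : ℕ) (hn : 3 ≤ n) (hj : Even j) (hj2 : 2 ≤ j) (hjℓ : j ≤ 2 * ℓ) :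
    1 - lamFH n ℓ j / lamFH n ℓ 0 ≤
      (j : ℝ) * (((j : ℝ) + (n : ℝ)) / 2 - 1) / (2 * (ℓ : ℝ) + (n : ℝ)) := by
  classical
  obtain ⟨M, hM⟩ := hj
  have hMℓ : M ≤ ℓ := by omega
  have hM1 : 1 ≤ M := by omega
  have hn3 : (3:ℝ) ≤ (n:ℝ) := by exact_mod_cast hn
  set ν : ℝ := ((n:ℝ) - 3) / 2 with hν
  have hν0 : 0 ≤ ν := by rw [hν]; linarith
  have hjR : (j:ℝ) = 2 * M := by rw [hM]; push_cast; ring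
  have hkey := Stmt4Aux.lamj_key n ℓ j hn (by omega) hjℓ
  rw [← hν] at hkey
  have hmaster := Stmt4Aux.master ν hν0 ℓ M hMℓ
  rw [show 2 * M = j from by omega] at hmaster
  rw [show 2 * (ℓ - M) = 2 * ℓ - j from by omega] at hmaster
  rw [show ν + 2 * (M:ℝ) = (j:ℝ) + ν from by rw [hjR]; ring] at hmaster
  rw [Stmt4Aux.lam0_eq n ℓ hn, ← hν]
  have hsplit2 : (∏ i ∈ Finset.range j, (2 * (ν + 1 + i)))
      = 2^j * ∏ i ∈ Finset.range j, (ν + 1 + i) := by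
    rw [Finset.prod_mul_distrib, Finset.prod_const, Finset.card_range]
  rw [hsplit2] at hmaster
  set J0 := Stmt4Aux.J (2 * ℓ) ν with hJ0
  set Jm := Stmt4Aux.J (2 * ℓ - j) ((j:ℝ) + ν) with hJm
  set P1 := ∏ i ∈ Finset.range j, (ν + 1 + i) with hP1
  set P2 := ∏ i ∈ Finset.range j, (2 * (ℓ:ℝ) - i) with hP2
  set q1 := ∏ k ∈ Finset.range M, ((ℓ:ℝ) - k) with hq1
  set q2 := ∏ k ∈ Finset.range M, ((ℓ:ℝ) + ν + 3/2 + k) with hq2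
  have hJ0pos : 0 < J0 := Stmt4Aux.Jpos ℓ ν hν0
  have hP1pos : 0 < P1 := Finset.prod_pos fun i _ => by positivity
  have hq2pos : 0 < q2 := Finset.prod_pos fun k _ => by positivity
  have hratio : lamFH n ℓ j / J0 = q1 / q2 := by
    rw [div_eq_div_iff hJ0pos.ne' hq2pos.ne']
    have h2 : P1 * 2^j ≠ 0 := by positivity
    have h1 : (lamFH n ℓ j * q2) * (P1 * 2^j) = (q1 * J0) * (P1 * 2^j) := by
      linear_combination q2 * hkey - hmaster
    exact mul_right_cancel₀ h2 h1
  rw [hratio]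
  have hqdiv : q1 / q2 = ∏ k ∈ Finset.range M, (((ℓ:ℝ) - k) / ((ℓ:ℝ) + ν + 3/2 + k)) := by
    rw [hq1, hq2, ← Finset.prod_div_distrib]
  rw [hqdiv]
  have hx0 : ∀ k ∈ Finset.range M, 0 ≤ ((ℓ:ℝ) - k) / ((ℓ:ℝ) + ν + 3/2 + k) := by
    intro k hk
    rw [Finset.mem_range] at hk
    have hkℓ : (k:ℝ) ≤ (ℓ:ℝ) := by
      have : (k:ℕ) ≤ ℓ := by omega
      exact_mod_cast this
    have hd : (0:ℝ) < (ℓ:ℝ) + ν + 3/2 + k := by positivity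
    exact div_nonneg (by linarith) hd.le
  have hx1 : ∀ k ∈ Finset.range M, ((ℓ:ℝ) - k) / ((ℓ:ℝ) + ν + 3/2 + k) ≤ 1 := by
    intro k hk
    have hd : (0:ℝ) < (ℓ:ℝ) + ν + 3/2 + k := by positivity
    rw [div_le_one hd]
    have : (0:ℝ) ≤ (k:ℝ) := by positivity
    linarith
  have h1 := Stmt4Aux.one_sub_prod_le (Finset.range M) _ hx0 hx1
  have h2 : ∑ k ∈ Finset.range M, (1 - ((ℓ:ℝ) - k) / ((ℓ:ℝ) + ν + 3/2 + k))
      ≤ ∑ k ∈ Finset.range M, ((ν + 3/2 + 2*(k:ℝ)) / ((ℓ:ℝ) + ν + 3/2)) := by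
    apply Finset.sum_le_sum
    intro k hk
    have hd1 : (0:ℝ) < (ℓ:ℝ) + ν + 3/2 := by positivity
    have hd2 : (0:ℝ) < (ℓ:ℝ) + ν + 3/2 + k := by positivity
    have e : 1 - ((ℓ:ℝ) - k) / ((ℓ:ℝ) + ν + 3/2 + k)
        = (ν + 3/2 + 2*(k:ℝ)) / ((ℓ:ℝ) + ν + 3/2 + k) := by
      field_simp
      ring
    rw [e]
    apply div_le_div_of_nonneg_left (by positivity) hd1 (by linarith [hd2, (by positivity : (0:ℝ) ≤ (k:ℝ))])
  have hid : ∀ N : ℕ, ∑ k ∈ Finset.range N, (k:ℝ) = (N:ℝ) * ((N:ℝ) - 1) / 2 := by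
    intro N
    induction N with
    | zero => simp
    | succ N ih =>
      rw [Finset.sum_range_succ, ih]
      push_cast
      ring
  have hsum : ∑ k ∈ Finset.range M, ((ν + 3/2 + 2*(k:ℝ)) / ((ℓ:ℝ) + ν + 3/2))
      = ((M:ℝ) * (ν + 3/2) + (M:ℝ) * ((M:ℝ) - 1)) / ((ℓ:ℝ) + ν + 3/2) := by
    rw [← Finset.sum_div]
    congr 1
    rw [Finset.sum_add_distrib, Finset.sum_const, Finset.card_range, ← Finset.mul_sum, hid M]
    push_cast
    ring
  have hfin : ((M:ℝ) * (ν + 3/2) + (M:ℝ) * ((M:ℝ) - 1)) / ((ℓ:ℝ) + ν + 3/2)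
      = (j:ℝ) * (((j:ℝ) + (n:ℝ)) / 2 - 1) / (2 * (ℓ:ℝ) + (n:ℝ)) := by
    have hnn : (n:ℝ) = 2*ν + 3 := by rw [hν]; ring
    rw [hjR, hnn]
    have hd1 : (0:ℝ) < (ℓ:ℝ) + ν + 3/2 := by positivity
    have hd2 : (0:ℝ) < 2*(ℓ:ℝ) + (2*ν + 3) := by positivity
    field_simp
    ring
  linarith [h1, h2, hsum, hfin]
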